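/- Let P ⊂ ℝ³ be the convex hull of the points (3,2,4), (1,4,0), (1,0,0), (-5,-6,-4). Then the polar set P° := {u ∈ ℝ³ : ⟨u,v⟩ ≥ -1 for all v ∈ P} equals the convex hull of the four points (-1,0,3/2), (-1,1,0), (3,-1,-2), (-1,0,1/2), and the average of these four points is the origin (so the barycentre of the tetrahedron P° is the origin). -/

import Mathlib

open Finset

private lemma mem_hull4 {q₁ q₂ q₃ q₄ u : Fin 3 → ℝ} {a b c d : ℝ}
    (ha : 0 ≤ a) (hb : 0 ≤ b) (hc : 0 ≤ c) (hd : 0 ≤ d) (hsum : a + b + c + d = 1)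
    (h : a • q₁ + b • q₂ + c • q₃ + d • q₄ = u) :
    u ∈ convexHull ℝ ({q₁, q₂, q₃, q₄} : Set (Fin 3 → ℝ)) := by
  have := (convex_convexHull ℝ ({q₁, q₂, q₃, q₄} : Set (Fin 3 → ℝ))).sum_mem
    (t := Finset.univ) (w := ![a, b, c, d]) (z := ![q₁, q₂, q₃, q₄])
    (fun i _ => by fin_cases i <;> simpa)
    (by simp [Fin.sum_univ_four, hsum])
    (fun i _ => by
      fin_cases i <;> apply subset_convexHull <;> simp)
  simpa [Fin.sum_univ_four, h] using this

open Finset in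
/-- The polar of the tetrahedron `P` with vertices `(3,2,4), (1,4,0), (1,0,0), (-5,-6,-4)`
is the tetrahedron with vertices `(-1,0,3/2), (-1,1,0), (3,-1,-2), (-1,0,1/2)`, and its
barycentre is the origin. -/
theorem stmt_1 :
    let ρ₁ : Fin 3 → ℝ := ![3, 2, 4]
    let ρ₂ : Fin 3 → ℝ := ![1, 4, 0]
    let ρ₃ : Fin 3 → ℝ := ![1, 0, 0]
    let ρ₄ : Fin 3 → ℝ := ![-5, -6, -4]
    let q₁ : Fin 3 → ℝ := ![-1, 0, 3/2]
    let q₂ : Fin 3 → ℝ := ![-1, 1, 0]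
    let q₃ : Fin 3 → ℝ := ![3, -1, -2]
    let q₄ : Fin 3 → ℝ := ![-1, 0, 1/2]
    {u : Fin 3 → ℝ | ∀ v ∈ convexHull ℝ ({ρ₁, ρ₂, ρ₃, ρ₄} : Set (Fin 3 → ℝ)),
        -1 ≤ ∑ i, u i * v i}
      = convexHull ℝ ({q₁, q₂, q₃, q₄} : Set (Fin 3 → ℝ)) ∧
    (1/4 : ℝ) • (q₁ + q₂ + q₃ + q₄) = 0 := by
  intro ρ₁ ρ₂ ρ₃ ρ₄ q₁ q₂ q₃ q₄
  constructor
  · apply Set.Subset.antisymm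
    · -- polar ⊆ hull
      intro u hu
      have h1 : -1 ≤ ∑ i, u i * ρ₁ i := hu ρ₁ (subset_convexHull ℝ _ (by simp))
      have h2 : -1 ≤ ∑ i, u i * ρ₂ i := hu ρ₂ (subset_convexHull ℝ _ (by simp))
      have h3 : -1 ≤ ∑ i, u i * ρ₃ i := hu ρ₃ (subset_convexHull ℝ _ (by simp))
      have h4 : -1 ≤ ∑ i, u i * ρ₄ i := hu ρ₄ (subset_convexHull ℝ _ (by simp))
      simp only [ρ₁, ρ₂, ρ₃, ρ₄, Fin.sum_univ_three, Matrix.cons_val_zero,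
        Matrix.cons_val_one, Matrix.head_cons, Matrix.cons_val_two, Matrix.tail_cons]
        at h1 h2 h3 h4
      refine mem_hull4 (a := (3*u 0 + 2*u 1 + 4*u 2 + 1)/4)
        (b := (u 0 + 4*u 1 + 1)/4) (c := (u 0 + 1)/4)
        (d := (-5*u 0 - 6*u 1 - 4*u 2 + 1)/4) ?_ ?_ ?_ ?_ (by ring) ?_
      · linarith
      · linarith
      · linarith
      · linarith
      · funext i
        fin_cases i <;>
          simp [q₁, q₂, q₃, q₄, Pi.add_apply, Pi.smul_apply, smul_eq_mul] <;> ring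
    · -- hull ⊆ polar
      apply convexHull_min
      · intro q hq
        intro v hv
        have hconv : ∀ c : Fin 3 → ℝ, Convex ℝ {v : Fin 3 → ℝ | -1 ≤ ∑ i, c i * v i} := by
          intro c
          intro x hx y hy a b ha hb hab
          simp only [Set.mem_setOf_eq] at hx hy ⊢
          have : ∑ i, c i * (a • x + b • y) i = a * (∑ i, c i * x i) + b * (∑ i, c i * y i) := by
            simp [Fin.sum_univ_three, Pi.add_apply, Pi.smul_apply, smul_eq_mul]; ring
          rw [this]
          nlinarith [mul_le_mul_of_nonneg_left hx ha, mul_le_mul_of_nonneg_left hy hb]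
        have key : ∀ c : Fin 3 → ℝ,
            (∀ r ∈ ({ρ₁, ρ₂, ρ₃, ρ₄} : Set (Fin 3 → ℝ)), -1 ≤ ∑ i, c i * r i) →
            -1 ≤ ∑ i, c i * v i :=
          fun c hc => convexHull_min hc (hconv c) hv
        rcases hq with rfl | rfl | rfl | rfl
        all_goals
          refine key _ ?_
          rintro r (rfl | rfl | rfl | rfl) <;>
            norm_num [ρ₁, ρ₂, ρ₃, ρ₄, q₁, q₂, q₃, q₄, Fin.sum_univ_three, Matrix.cons_val_two,
              Matrix.tail_cons, Matrix.head_cons]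
      · -- the polar set is convex
        intro x hx y hy a b ha hb hab
        simp only [Set.mem_setOf_eq] at hx hy ⊢
        intro v hv
        have : ∑ i, (a • x + b • y) i * v i = a * (∑ i, x i * v i) + b * (∑ i, y i * v i) := by
          simp [Fin.sum_univ_three, Pi.add_apply, Pi.smul_apply, smul_eq_mul]; ring
        rw [this]
        nlinarith [mul_le_mul_of_nonneg_left (hx v hv) ha, mul_le_mul_of_nonneg_left (hy v hv) hb]
  · funext i
    fin_cases i <;>
      norm_num [q₁, q₂, q₃, q₄, Pi.add_apply, Pi.smul_apply]
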